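/- arXiv:0909.3281 — 2 statements merged into one kernel-verified Lean document; each statement's English description precedes it below -/
import Mathlib

section
/- Let α/β = [a_1, ..., a_n] be a 1-regular continued fraction with integer entries and a_1, a_2 > 0. Then α/β > 1. -/
/-- Evaluation of a finite continued fraction `[a₁, a₂, …, aₙ] = a₁ + 1/(a₂ + 1/(⋯ + 1/aₙ))`. -/
def cf : List ℤ → ℚ
  | [] => 0
  | a :: l => a + (cf l)⁻¹

/-- A continued fraction `[a₁, …, aₙ]` is 1-regular: all entries are nonzero,
`a_{n-1} aₙ > 0`, and there are no two consecutive sign changes. -/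
def OneRegular (l : List ℤ) : Prop :=
  (∀ a ∈ l, a ≠ 0) ∧
  (2 ≤ l.length → 0 < l[l.length - 2]! * l[l.length - 1]!) ∧
  (∀ i, i + 2 < l.length → l[i]! * l[i + 1]! < 0 → 0 < l[i + 1]! * l[i + 2]!)

lemma oneRegular_tail (a : ℤ) (t : List ℤ) (h : OneRegular (a :: t)) (ht : t ≠ []) :
    OneRegular t := by
  obtain ⟨h1, h2, h3⟩ := h
  refine ⟨fun x hx => h1 x (List.mem_cons_of_mem _ hx), ?_, ?_⟩
  · intro hlen
    have hl : (a :: t).length = t.length + 1 := by simp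
    have := h2 (by simp; omega)
    have e1 : (a :: t)[(a::t).length - 2]! = t[t.length - 2]! := by
      rw [hl]
      have : t.length + 1 - 2 = (t.length - 2) + 1 := by omega
      rw [this]; simp
    have e2 : (a :: t)[(a::t).length - 1]! = t[t.length - 1]! := by
      rw [hl]
      have : t.length + 1 - 1 = (t.length - 1) + 1 := by omega
      rw [this]; simp
    rwa [e1, e2] at this
  · intro i hi hlt
    have := h3 (i+1) (by simp; omega)
    simp only [List.getElem!_cons_succ] at this
    exact this hlt

lemma key : ∀ l : List ℤ, l ≠ [] → OneRegular l →
    0 < (l[0]! : ℚ) * cf l ∧ (2 ≤ l.length → 0 < l[0]! * l[1]! → 1 < |cf l|) := by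
  intro l
  induction l with
  | nil => intro h; exact absurd rfl h
  | cons a t ih =>
    intro _ hreg
    have ha : a ≠ 0 := hreg.1 a (by simp)
    have haQ : (a:ℚ) ≠ 0 := Int.cast_ne_zero.mpr ha
    have h1a : (1:ℚ) ≤ |(a:ℚ)| := by
      rw [← Int.cast_abs]; exact_mod_cast Int.one_le_abs (by omega)
    match t, ih with
    | [], _ =>
      constructor
      · show (0:ℚ) < a * (a + (cf [])⁻¹)
        simp [cf]
        positivity
      · intro hlen; simp at hlen
    | b :: s, ih =>
      have hreg' : OneRegular (b :: s) := oneRegular_tail a _ hreg (by simp)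
      have hb : b ≠ 0 := hreg.1 b (by simp)
      obtain ⟨ihx, ihy⟩ := ih (by simp) hreg'
      simp only [List.getElem!_cons_zero, List.getElem!_cons_succ] at ihx ihy ⊢
      set x := cf (b :: s) with hxdef
      have hcf : cf (a :: b :: s) = a + x⁻¹ := rfl
      have hx0 : x ≠ 0 := by
        intro h; rw [h] at ihx; simp at ihx
      rcases lt_trichotomy (a * b) 0 with hab | hab | hab
      · -- sign change: need s ≠ [] etc.
        match s with
        | [] =>
          exfalso
          have := hreg.2.1 (by simp)
          simp at this
          omega
        | c :: s' =>
          have hbc := hreg.2.2 0 (by simp) (by simpa using hab)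
          simp only [List.getElem!_cons_zero, List.getElem!_cons_succ] at hbc
          have hx1 : 1 < |x| := ihy (by simp) (by simpa using hbc)
          have hinv : |x⁻¹| < 1 := by
            rw [abs_inv]; rw [inv_lt_one_iff₀]; right; exact hx1
          constructor
          · rw [hcf]
            have h1 : |(a:ℚ) * x⁻¹| < |(a:ℚ)| := by
              rw [abs_mul]
              calc |(a:ℚ)| * |x⁻¹| < |(a:ℚ)| * 1 := by
                    apply mul_lt_mul_of_pos_left hinv (by linarith)
                _ = |(a:ℚ)| := mul_one _
            have h2 := neg_abs_le ((a:ℚ) * x⁻¹)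
            have h3 : |(a:ℚ)| ≤ (a:ℚ)^2 := by
              nlinarith [sq_abs (a:ℚ), abs_nonneg (a:ℚ)]
            nlinarith
          · intro _ hpos
            exfalso
            have : (0:ℚ) < a * b := by exact_mod_cast hpos
            have : ((a:ℚ) * b) < 0 := by exact_mod_cast hab
            linarith
      · exact absurd hab (mul_ne_zero ha hb)
      · -- same sign
        have habQ : (0:ℚ) < (a:ℚ) * b := by exact_mod_cast hab
        have hax : (0:ℚ) < (a:ℚ) * x := by nlinarith [sq_nonneg (b:ℚ)]
        have haxinv : (0:ℚ) < (a:ℚ) * x⁻¹ := by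
          have : (a:ℚ) * x⁻¹ = (a * x) / x^2 := by field_simp
          rw [this]; positivity
        constructor
        · rw [hcf]; nlinarith [sq_nonneg (a:ℚ)]
        · intro _ _
          rw [hcf]
          rcases lt_or_gt_of_ne haQ with hneg | hpos
          · have hxineg : x⁻¹ < 0 := by nlinarith
            have : (a:ℚ) + x⁻¹ < -1 := by
              have : (a:ℚ) ≤ -1 := by rw [abs_of_neg hneg] at h1a; linarith
              linarith
            rw [abs_of_neg (by linarith)]; linarith
          · have hxipos : (0:ℚ) < x⁻¹ := by nlinarith
            have : (1:ℚ) < (a:ℚ) + x⁻¹ := by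
              rw [abs_of_pos hpos] at h1a; linarith
            rw [abs_of_pos (by linarith)]; linarith

theorem one_regular_gt_one (l : List ℤ) (hn : 2 ≤ l.length)
    (hreg : OneRegular l) (h1 : 0 < l[0]!) (h2 : 0 < l[1]!)
    (α β : ℤ) (hβ : β ≠ 0) (hval : cf l = (α : ℚ) / β) :
    1 < (α : ℚ) / β := by
  rw [← hval]
  have hne : l ≠ [] := by intro h; rw [h] at hn; simp at hn
  obtain ⟨k1, k2⟩ := key l hne hreg
  have habs : 1 < |cf l| := k2 hn (mul_pos h1 h2)
  have hpos : 0 < cf l := by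
    have h0Q : (0:ℚ) < (l[0]! : ℚ) := by exact_mod_cast h1
    nlinarith
  rwa [abs_of_pos hpos] at habs
end

section
/- The Lagrange identity for continued fractions holds: for positive integers a, b, c, d, any integer sequences x and y, and any rational value, [x, a, b, -c, -d, -y] = [x, a, b-1, 1, c-1, d, y] whenever both sides are defined. -/
/-- A continued fraction is defined when no proper nonempty tail evaluates to `0`
(so no division by zero occurs in its evaluation). -/
def CFDefined (l : List ℤ) : Prop :=
  ∀ t : List ℤ, t ≠ [] → t.length < l.length → t <:+ l → cf t ≠ 0

lemma cf_neg (l : List ℤ) : cf (l.map (fun e => -e)) = - cf l := by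
  induction l with
  | nil => simp [cf]
  | cons a l ih =>
    simp only [List.map_cons, cf, ih, inv_neg]
    push_cast
    ring

lemma cf_append_congr (x : List ℤ) {l₁ l₂ : List ℤ} (h : cf l₁ = cf l₂) :
    cf (x ++ l₁) = cf (x ++ l₂) := by
  induction x with
  | nil => simpa using h
  | cons a x ih => simp [cf, ih]

lemma lagrange_aux (b c w : ℚ) (h1 : c + w ≠ 0) (h2 : c - 1 + w ≠ 0) :
    b + (-(c + w))⁻¹ = (b - 1) + (1 + ((c - 1) + w)⁻¹)⁻¹ := by
  rw [inv_neg]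
  have e : 1 + ((c - 1) + w)⁻¹ = (c + w) / (c - 1 + w) := by
    field_simp
    ring
  rw [e, inv_div]
  field_simp
  ring

/-- Lagrange identity: `[x, a, b, -c, -d, -y] = [x, a, b-1, 1, c-1, d, y]`
whenever both sides are defined. -/
theorem lagrange_identity (a b c d : ℤ) (ha : 0 < a) (hb : 0 < b) (hc : 0 < c)
    (hd : 0 < d) (x y : List ℤ)
    (hL : CFDefined (x ++ [a, b, -c, -d] ++ y.map (fun e => -e)))
    (hR : CFDefined (x ++ [a, b - 1, 1, c - 1, d] ++ y)) :
    cf (x ++ [a, b, -c, -d] ++ y.map (fun e => -e)) =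
      cf (x ++ [a, b - 1, 1, c - 1, d] ++ y) := by
  set y' := y.map (fun e => -e) with hy'
  -- nonzero facts from definedness
  have h1 : cf ([-c, -d] ++ y') ≠ 0 := by
    apply hL ([-c, -d] ++ y')
    · simp
    · simp; omega
    · have : x ++ [a, b, -c, -d] ++ y' = (x ++ [a, b]) ++ ([-c, -d] ++ y') := by
        simp
      rw [this]
      exact List.suffix_append _ _
  have h2 : cf ([c - 1, d] ++ y) ≠ 0 := by
    apply hR ([c - 1, d] ++ y)
    · simp
    · simp; omega
    · have : x ++ [a, b - 1, 1, c - 1, d] ++ y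
          = (x ++ [a, b - 1, 1]) ++ ([c - 1, d] ++ y) := by simp
      rw [this]
      exact List.suffix_append _ _
  -- evaluate the relevant tails
  have hnd : cf ((-d) :: y') = -cf (d :: y) := by
    rw [hy', show ((-d) :: List.map (fun e => -e) y)
        = (d :: y).map (fun e => -e) from rfl, cf_neg]
  have e1 : cf ([-c, -d] ++ y') = -((c : ℚ) + (cf (d :: y))⁻¹) := by
    show ((-c : ℤ) : ℚ) + (cf ((-d) :: y'))⁻¹ = _
    rw [hnd, inv_neg]
    push_cast
    ring
  have e2 : cf ([c - 1, d] ++ y) = (c : ℚ) - 1 + (cf (d :: y))⁻¹ := by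
    show ((c - 1 : ℤ) : ℚ) + (cf (d :: y))⁻¹ = _
    push_cast
    ring
  have e3 : cf ([1, c - 1, d] ++ y) = 1 + (cf ([c - 1, d] ++ y))⁻¹ := by
    show ((1 : ℤ) : ℚ) + (cf ([c - 1, d] ++ y))⁻¹ = _
    push_cast
    ring
  have h1' : (c : ℚ) + (cf (d :: y))⁻¹ ≠ 0 := by
    intro h
    apply h1
    rw [e1, h, neg_zero]
  have h2' : (c : ℚ) - 1 + (cf (d :: y))⁻¹ ≠ 0 := by
    rw [e2] at h2
    exact h2
  -- core identity on tails
  have core : cf ([b, -c, -d] ++ y') = cf ([b - 1, 1, c - 1, d] ++ y) := by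
    show (b : ℚ) + (cf ([-c, -d] ++ y'))⁻¹
        = ((b - 1 : ℤ) : ℚ) + (cf ([1, c - 1, d] ++ y))⁻¹
    rw [e1, e3, e2]
    push_cast
    exact lagrange_aux b c (cf (d :: y))⁻¹ h1' h2'
  have key : cf ([a, b, -c, -d] ++ y') = cf ([a, b - 1, 1, c - 1, d] ++ y) := by
    show (a : ℚ) + (cf ([b, -c, -d] ++ y'))⁻¹
        = (a : ℚ) + (cf ([b - 1, 1, c - 1, d] ++ y))⁻¹
    rw [core]
  calc cf (x ++ [a, b, -c, -d] ++ y')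
      = cf (x ++ ([a, b, -c, -d] ++ y')) := by rw [List.append_assoc]
    _ = cf (x ++ ([a, b - 1, 1, c - 1, d] ++ y)) := cf_append_congr x key
    _ = cf (x ++ [a, b - 1, 1, c - 1, d] ++ y) := by rw [List.append_assoc]
end
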